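/- For every permutation σ of {1,...,n}, the number of descents of σ equals the number of ascents of its Lehmer code L(σ). Consequently, the n-th Eulerian polynomial A_n(t) = Σ_{σ ∈ S_n} t^{des(σ)} satisfies A_n(t) = Σ_{e ∈ I_n} t^{asc(e)}, where I_n is the set of n-inversion sequences. -/
import Mathlib


/-- The Lehmer code of a permutation of `Fin n` (0-indexed). -/
def lehmer {n : ℕ} (σ : Equiv.Perm (Fin n)) : ℕ → ℕ := fun i =>
  if h : i < n then
    (Finset.univ.filter (fun j : Fin n => (j : ℕ) < i ∧ σ ⟨i, h⟩ < σ j)).card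
  else 0

/-- A permutation of `Fin n` as a function `ℕ → ℕ` (0 outside range). -/
def toFun {n : ℕ} (σ : Equiv.Perm (Fin n)) : ℕ → ℕ := fun i =>
  if h : i < n then (σ ⟨i, h⟩ : ℕ) else 0

/-- Number of ascents of a length-`n` sequence (0-indexed positions `0,...,n-2`). -/
def ascN (n : ℕ) (f : ℕ → ℕ) : ℕ :=
  ((Finset.range (n - 1)).filter (fun i => f i < f (i + 1))).card

/-- Number of descents of a length-`n` sequence (0-indexed positions `0,...,n-2`). -/
def desN (n : ℕ) (f : ℕ → ℕ) : ℕ :=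
  ((Finset.range (n - 1)).filter (fun i => f (i + 1) < f i)).card

/-- The Finset of `n`-inversion sequences, as functions `Fin n → ℕ` with `e i ≤ i`. -/
def invSeqs (n : ℕ) : Finset (Fin n → ℕ) :=
  Fintype.piFinset (fun i => Finset.range (i.1 + 1))

/-- Extension of `e : Fin n → ℕ` to `ℕ → ℕ` by zero. -/
def ext {n : ℕ} (e : Fin n → ℕ) : ℕ → ℕ := fun i =>
  if h : i < n then e ⟨i, h⟩ else 0

/-- The number of descents of `σ` equals the number of ascents of its Lehmer code;
consequently the Eulerian polynomial `A_n(t) = Σ_σ t^{des σ}` equals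
`Σ_{e ∈ I_n} t^{asc e}`. -/
-- key descent/ascent lemma
lemma lehmer_asc_iff {n : ℕ} (σ : Equiv.Perm (Fin n)) (i : ℕ) (h : i + 1 < n) :
    (σ ⟨i + 1, h⟩ < σ ⟨i, Nat.lt_of_succ_lt h⟩) ↔ lehmer σ i < lehmer σ (i + 1) := by
  have hi : i < n := Nat.lt_of_succ_lt h
  rw [lehmer, lehmer, dif_pos hi, dif_pos h]
  set a := σ ⟨i, hi⟩ with ha
  set b := σ ⟨i + 1, h⟩ with hb
  constructor
  · intro hba
    have hsub : insert (⟨i, hi⟩ : Fin n)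
        (Finset.univ.filter (fun j : Fin n => (j : ℕ) < i ∧ a < σ j)) ⊆
        Finset.univ.filter (fun j : Fin n => (j : ℕ) < i + 1 ∧ b < σ j) := by
      intro j hj
      simp only [Finset.mem_insert, Finset.mem_filter, Finset.mem_univ, true_and] at hj ⊢
      rcases hj with rfl | ⟨hj1, hj2⟩
      · exact ⟨Nat.lt_succ_self i, hba⟩
      · exact ⟨Nat.lt_succ_of_lt hj1, lt_trans hba hj2⟩
    have hni : (⟨i, hi⟩ : Fin n) ∉
        Finset.univ.filter (fun j : Fin n => (j : ℕ) < i ∧ a < σ j) := by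
      simp
    calc _ < _ + 1 := Nat.lt_succ_self _
      _ = (insert (⟨i, hi⟩ : Fin n)
        (Finset.univ.filter (fun j : Fin n => (j : ℕ) < i ∧ a < σ j))).card := by
          rw [Finset.card_insert_of_notMem hni]
      _ ≤ _ := Finset.card_le_card hsub
  · intro hcard
    by_contra hba
    push_neg at hba
    have hab : a < b := by
      rcases lt_or_eq_of_le hba with h' | h'
      · exact h'
      · exact absurd (σ.injective h') (by simp [Fin.ext_iff])
    refine absurd hcard (not_lt.mpr (Finset.card_le_card ?_))
    intro j hj
    simp only [Finset.mem_filter, Finset.mem_univ, true_and] at hj ⊢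
    obtain ⟨hj1, hj2⟩ := hj
    have hji : (j : ℕ) ≠ i := by
      intro h'
      have hj' : j = ⟨i, hi⟩ := Fin.ext h'
      rw [hj'] at hj2
      exact absurd (lt_trans hab hj2) (lt_irrefl _)
    exact ⟨lt_of_le_of_ne (Nat.lt_succ_iff.mp hj1) hji, lt_trans hab hj2⟩

open Finset in
lemma lehmer_eq_card {n : ℕ} (σ : Equiv.Perm (Fin n)) (i : Fin n) :
    lehmer σ i = (univ.filter (fun w : Fin n =>
      σ i < w ∧ w ∉ (univ.filter (fun j => i < j)).image σ)).card := by
  rw [lehmer, dif_pos i.2]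
  have h1 : (univ.filter (fun j : Fin n => (j : ℕ) < i ∧ σ ⟨i, i.2⟩ < σ j)).card
      = (univ.filter (fun w : Fin n => (σ.symm w : Fin n) < i ∧ σ i < w)).card := by
    apply Finset.card_bij' (fun j _ => σ j) (fun w _ => σ.symm w)
    · intro a ha
      simp only [Finset.mem_filter, Finset.mem_univ, true_and, Fin.eta] at ha
      simp only [Finset.mem_filter, Finset.mem_univ, true_and, Equiv.symm_apply_apply]
      exact ⟨Fin.lt_def.mpr ha.1, ha.2⟩
    · intro a ha
      simp only [Finset.mem_filter, Finset.mem_univ, true_and] at ha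
      simp only [Finset.mem_filter, Finset.mem_univ, true_and, Fin.eta,
        Equiv.apply_symm_apply]
      exact ⟨Fin.lt_def.mp ha.1, ha.2⟩
    · intro a _; exact σ.symm_apply_apply a
    · intro a _; exact σ.apply_symm_apply a
  rw [h1]
  congr 1
  apply Finset.filter_congr
  intro w _
  simp only [Finset.mem_image, Finset.mem_filter, Finset.mem_univ, true_and]
  constructor
  · rintro ⟨h2, h3⟩
    refine ⟨h3, ?_⟩
    rintro ⟨j, hj, rfl⟩
    simp only [Equiv.symm_apply_apply] at h2
    exact absurd (lt_trans hj h2) (lt_irrefl _)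
  · rintro ⟨h3, h2⟩
    refine ⟨?_, h3⟩
    rcases lt_trichotomy (σ.symm w) i with h | h | h
    · exact h
    · exact absurd (by rw [← h, Equiv.apply_symm_apply]) (ne_of_lt h3).symm
    · exact absurd ⟨σ.symm w, h, by simp⟩ h2

open Finset in
lemma lehmer_inj {n : ℕ} (σ τ : Equiv.Perm (Fin n))
    (h : ∀ i : Fin n, lehmer σ i = lehmer τ i) : σ = τ := by
  have key : ∀ i : Fin n, (∀ j, i < j → σ j = τ j) → σ i = τ i := by
    intro i hj
    have hT : (univ.filter (fun j => i < j)).image σ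
        = (univ.filter (fun j => i < j)).image τ := by
      apply Finset.image_congr
      intro j hjmem
      simp only [coe_filter, Set.mem_setOf_eq, mem_coe, mem_univ, true_and] at hjmem
      exact hj j hjmem
    set T := (univ.filter (fun j => i < j)).image σ with hTdef
    have hσT : σ i ∉ T := by
      simp only [hTdef, mem_image, mem_filter, mem_univ, true_and]
      rintro ⟨j, hj', hj2⟩
      exact absurd (σ.injective hj2) (ne_of_gt hj')
    have hτT : τ i ∉ T := by
      rw [hT] at hσT ⊢
      simp only [mem_image, mem_filter, mem_univ, true_and]
      rintro ⟨j, hj', hj2⟩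
      exact absurd (τ.injective hj2) (ne_of_gt hj')
    have heq : (univ.filter (fun w : Fin n => σ i < w ∧ w ∉ T)).card
        = (univ.filter (fun w : Fin n => τ i < w ∧ w ∉ T)).card := by
      have := h i
      rw [lehmer_eq_card, lehmer_eq_card, ← hT] at this
      exact this
    by_contra hne
    -- wlog trick
    have mono : ∀ a b : Fin n, a < b → a ∉ T → b ∉ T →
        (univ.filter (fun w : Fin n => b < w ∧ w ∉ T)).card
          < (univ.filter (fun w : Fin n => a < w ∧ w ∉ T)).card := by
      intro a b hab haT hbT
      have hsub : insert b (univ.filter (fun w : Fin n => b < w ∧ w ∉ T)) ⊆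
          univ.filter (fun w : Fin n => a < w ∧ w ∉ T) := by
        intro w hw
        simp only [mem_insert, mem_filter, mem_univ, true_and] at hw ⊢
        rcases hw with rfl | ⟨h1, h2⟩
        · exact ⟨hab, hbT⟩
        · exact ⟨lt_trans hab h1, h2⟩
      have hb : b ∉ univ.filter (fun w : Fin n => b < w ∧ w ∉ T) := by simp
      calc _ < _ + 1 := Nat.lt_succ_self _
        _ = (insert b (univ.filter (fun w : Fin n => b < w ∧ w ∉ T))).card := by
            rw [card_insert_of_notMem hb]
        _ ≤ _ := card_le_card hsub
    rcases lt_trichotomy (σ i) (τ i) with hlt | heq' | hlt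
    · exact absurd heq (ne_of_gt (mono _ _ hlt hσT hτT))
    · exact hne heq'
    · exact absurd heq (ne_of_lt (mono _ _ hlt hτT hσT))
  -- downward induction via maximal counterexample
  ext i
  show (σ i : ℕ) = τ i
  by_contra hne
  have hs : (univ.filter (fun i : Fin n => σ i ≠ τ i)).Nonempty :=
    ⟨i, by simp only [mem_filter, mem_univ, true_and]; exact fun hc => hne (by rw [hc])⟩
  set s := univ.filter (fun i : Fin n => σ i ≠ τ i)
  have hmax := Finset.max'_mem s hs
  simp only [s, mem_filter, mem_univ, true_and] at hmax
  apply hmax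
  apply key
  intro j hj
  by_contra hcj
  have : j ∈ s := by simp only [s, mem_filter, mem_univ, true_and]; exact hcj
  exact absurd (Finset.le_max' s j this) (not_le.mpr hj)


lemma lehmer_lt {n : ℕ} (σ : Equiv.Perm (Fin n)) (i : Fin n) :
    lehmer σ (i : ℕ) < (i : ℕ) + 1 := by
  rw [lehmer, dif_pos i.2]
  have : (Finset.univ.filter (fun j : Fin n => (j : ℕ) < i ∧ σ ⟨i, i.2⟩ < σ j))
      ⊆ Finset.univ.filter (fun j : Fin n => j < i) := by
    intro j hj
    simp only [Finset.mem_filter, Finset.mem_univ, true_and] at hj ⊢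
    exact Fin.lt_def.mpr hj.1
  calc _ ≤ (Finset.univ.filter (fun j : Fin n => j < i)).card := Finset.card_le_card this
    _ = (i : ℕ) := by
        rw [show Finset.univ.filter (fun j : Fin n => j < i) = Finset.Iio i from by
          ext j; simp [Finset.mem_Iio]]
        exact Fin.card_Iio i
    _ < _ := Nat.lt_succ_self _

lemma des_eq_asc {n : ℕ} (σ : Equiv.Perm (Fin n)) : desN n (toFun σ) = ascN n (lehmer σ) := by
  unfold desN ascN
  apply Finset.card_bij' (fun i _ => i) (fun i _ => i) <;> try (intro a _; rfl)
  · intro i hi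
    simp only [Finset.mem_filter, Finset.mem_range] at hi ⊢
    obtain ⟨hi1, hi2⟩ := hi
    have h : i + 1 < n := by omega
    refine ⟨hi1, (lehmer_asc_iff σ i h).mp ?_⟩
    rw [toFun, toFun, dif_pos h, dif_pos (Nat.lt_of_succ_lt h)] at hi2
    exact hi2
  · intro i hi
    simp only [Finset.mem_filter, Finset.mem_range] at hi ⊢
    obtain ⟨hi1, hi2⟩ := hi
    have h : i + 1 < n := by omega
    refine ⟨hi1, ?_⟩
    rw [toFun, toFun, dif_pos h, dif_pos (Nat.lt_of_succ_lt h)]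
    exact_mod_cast (lehmer_asc_iff σ i h).mpr hi2

theorem stmt1 (n : ℕ) :
    (∀ σ : Equiv.Perm (Fin n), desN n (toFun σ) = ascN n (lehmer σ)) ∧
    ∑ σ : Equiv.Perm (Fin n), (Polynomial.X : Polynomial ℚ) ^ desN n (toFun σ)
      = ∑ e ∈ invSeqs n, (Polynomial.X : Polynomial ℚ) ^ ascN n (ext e) := by
  refine ⟨des_eq_asc, ?_⟩
  have hext : ∀ σ : Equiv.Perm (Fin n), ext (fun i : Fin n => lehmer σ i) = lehmer σ := by
    intro σ
    funext i
    rw [ext]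
    split
    · rfl
    · rw [lehmer]; rw [dif_neg ‹¬ i < n›]
  have hmem : ∀ σ : Equiv.Perm (Fin n), (fun i : Fin n => lehmer σ i) ∈ invSeqs n := by
    intro σ
    rw [invSeqs, Fintype.mem_piFinset]
    intro i
    rw [Finset.mem_range]
    exact lehmer_lt σ i
  have hinj : ∀ σ ∈ (Finset.univ : Finset (Equiv.Perm (Fin n))),
      ∀ τ ∈ (Finset.univ : Finset (Equiv.Perm (Fin n))),
      (fun i : Fin n => lehmer σ i) = (fun i : Fin n => lehmer τ i) → σ = τ := by
    intro σ _ τ _ hfe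
    apply lehmer_inj
    intro i
    exact congrFun hfe i
  have hcard : (invSeqs n).card ≤ (Finset.univ : Finset (Equiv.Perm (Fin n))).card := by
    rw [Finset.card_univ, Fintype.card_perm, Fintype.card_fin]
    rw [invSeqs, Fintype.card_piFinset]
    simp only [Finset.card_range]
    rw [Fin.prod_univ_eq_prod_range (fun i => i + 1), Finset.prod_range_add_one_eq_factorial]
  apply Finset.sum_bij (fun (σ : Equiv.Perm (Fin n)) _ => (fun i : Fin n => lehmer σ i))
  · intro σ _; exact hmem σ
  · exact hinj
  · intro e he
    obtain ⟨σ, hσ, hσe⟩ := Finset.surj_on_of_inj_on_of_card_le _ (fun σ _ => hmem σ)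
      (fun a b ha hb => hinj a ha b hb) hcard e he
    exact ⟨σ, hσ, hσe.symm⟩
  · intro σ _
    rw [hext σ, des_eq_asc]
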